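/- arXiv:1310.7199 — 4 statements merged into one kernel-verified Lean document; each statement's English description precedes it below -/
import Mathlib

section
/- For $\varepsilon \ge 0$ define the change-of-variables operator $\mathcal{T}_\varepsilon$ on $L^2(\mathbb{R}^{2d})$ by $(\mathcal{T}_\varepsilon\psi)(R,r) := \psi\bigl(R - \tfrac{\varepsilon r}{1+\varepsilon},\, R + \tfrac{r}{1+\varepsilon}\bigr)$. Then for any $\psi \in L^2(\mathbb{R}^{2d})$ such that $(x - X)\cdot(\nabla_X + \nabla_x)\psi \in L^2(\mathbb{R}^{2d})$, one has $\|\mathcal{T}_\varepsilon\psi - \mathcal{T}_0\psi\|_{L^2(\mathbb{R}^{2d})} \le \varepsilon\,\|(x - X)\cdot(\nabla_X + \nabla_x)\psi\|_{L^2(\mathbb{R}^{2d})}$. -/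
open MeasureTheory

/-- The `L²` norm of a function (square root of the integral of `‖f‖²`). -/
noncomputable def L2norm {α : Type*} [MeasureSpace α] {E : Type*} [NormedAddCommGroup E]
    (f : α → E) : ℝ :=
  Real.sqrt (∫ x, ‖f x‖ ^ 2)

/-- The change-of-variables (center of mass / relative coordinate) operator
`(𝒯_ε ψ)(R,r) = ψ(R - εr/(1+ε), R + r/(1+ε))`. -/
noncomputable def Tcm {d : ℕ} (ε : ℝ)
    (ψ : EuclideanSpace ℝ (Fin d) × EuclideanSpace ℝ (Fin d) → ℂ) :
    EuclideanSpace ℝ (Fin d) × EuclideanSpace ℝ (Fin d) → ℂ :=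
  fun p => ψ (p.1 - (ε / (1 + ε)) • p.2, p.1 + (1 / (1 + ε)) • p.2)

section Aux

open ENNReal Set

lemma cs_lintegral {α : Type*} [MeasurableSpace α] (μ : Measure α) {f : α → ℝ≥0∞}
    (hf : AEMeasurable f μ) :
    (∫⁻ a, f a ∂μ) ^ 2 ≤ μ Set.univ * ∫⁻ a, f a ^ 2 ∂μ := by
  have h := ENNReal.lintegral_mul_le_Lp_mul_Lq μ
    (Real.holderConjugate_iff_eq_conjExponent (by norm_num) |>.2 (by norm_num) :
      Real.HolderConjugate 2 2) hf aemeasurable_const (g := fun _ => 1)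
  simp only [Pi.mul_apply, mul_one, ENNReal.one_rpow, lintegral_one] at h
  have h2 : ∀ x : ℝ≥0∞, x ^ (2:ℝ) = x ^ 2 := fun x => by
    rw [← ENNReal.rpow_natCast x 2]; norm_num
  calc (∫⁻ a, f a ∂μ) ^ 2 ≤ ((∫⁻ a, f a ^ (2:ℝ) ∂μ) ^ (1/(2:ℝ)) * μ Set.univ ^ (1/(2:ℝ)))^2 := by
        exact pow_le_pow_left' h 2
    _ = μ Set.univ * ∫⁻ a, f a ^ 2 ∂μ := by
        rw [mul_pow, ← h2, ← h2, ← ENNReal.rpow_mul, ← ENNReal.rpow_mul]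
        norm_num
        exact mul_comm _ _

variable {d : ℕ}
local notation "E" => EuclideanSpace ℝ (Fin d)

noncomputable def phiCM {d : ℕ} (s : ℝ)
    (q : EuclideanSpace ℝ (Fin d) × EuclideanSpace ℝ (Fin d)) :
    EuclideanSpace ℝ (Fin d) × EuclideanSpace ℝ (Fin d) :=
  (q.1 - (s / (1 + s)) • q.2, q.1 + (1 / (1 + s)) • q.2)

lemma mp_shear2 : MeasurePreserving (fun p : E × E => (p.1, p.1 + p.2)) volume volume := by
  rw [Measure.volume_eq_prod]
  exact (MeasurePreserving.id volume).skew_product measurable_add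
    (Filter.Eventually.of_forall fun x => map_add_left_eq_self volume x)

lemma mp_shear1 (c : ℝ) :
    MeasurePreserving (fun p : E × E => (p.1 + c • p.2, p.2)) volume volume := by
  have h1 : MeasurePreserving (fun p : E × E => (p.1, c • p.1 + p.2)) volume volume := by
    rw [Measure.volume_eq_prod]
    exact (MeasurePreserving.id volume).skew_product
      ((measurable_fst.const_smul c).add measurable_snd)
      (Filter.Eventually.of_forall fun x => map_add_left_eq_self volume (c • x))
  have h2 := (Measure.measurePreserving_swap.comp h1).comp
    (Measure.measurePreserving_swap (μ := (volume : Measure E)) (ν := volume))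
  have heq : (fun p : E × E => (p.1 + c • p.2, p.2))
      = ((Prod.swap ∘ fun p : E × E => (p.1, c • p.1 + p.2)) ∘ Prod.swap) := by
    funext p
    simp [Prod.swap, add_comm]
  rw [Measure.volume_eq_prod, heq]
  exact h2

lemma mp_phiCM {s : ℝ} (hs : 0 ≤ s) :
    MeasurePreserving (phiCM (d := d) s) volume volume := by
  have hne : (1 : ℝ) + s ≠ 0 := by linarith
  have hcomp : phiCM (d := d) s =
      (fun p : E × E => (p.1, p.1 + p.2)) ∘ (fun p : E × E => (p.1 + (-(s/(1+s))) • p.2, p.2)) := by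
    funext q
    simp only [Function.comp_apply, phiCM, neg_smul, Prod.mk.injEq]
    constructor
    · abel
    · have hb : 1 / (1 + s) = 1 - s / (1 + s) := by field_simp; ring
      rw [hb, sub_smul, one_smul]
      abel
  rw [hcomp]
  exact mp_shear2.comp (mp_shear1 (-(s/(1+s))))

lemma phiCM_snd_sub_fst {s : ℝ} (hs : 0 ≤ s) (q : E × E) :
    (phiCM s q).2 - (phiCM s q).1 = q.2 := by
  have hne : (1 : ℝ) + s ≠ 0 := by linarith
  have hba : s / (1 + s) + 1 / (1 + s) = 1 := by field_simp; ring
  simp only [phiCM]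
  rw [show q.1 + (1 / (1+s)) • q.2 - (q.1 - (s/(1+s)) • q.2)
      = (s/(1+s) + 1/(1+s)) • q.2 by rw [add_smul]; abel, hba, one_smul]

lemma measurable_phiCM : Measurable (fun z : ℝ × (E × E) => phiCM z.1 z.2) := by
  apply Measurable.prod
  · exact measurable_snd.fst.sub
      ((measurable_fst.div (measurable_const.add measurable_fst)).smul measurable_snd.snd)
  · exact measurable_snd.fst.add
      ((measurable_const.div (measurable_const.add measurable_fst)).smul measurable_snd.snd)

lemma hasDerivAt_phiCM_comp (ψ : E × E → ℂ) (hψdiff : Differentiable ℝ ψ) (q : E × E)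
    {s : ℝ} (hs : 0 ≤ s) :
    HasDerivAt (fun t => ψ (phiCM t q))
      ((-(((1+s)^2)⁻¹)) • fderiv ℝ ψ (phiCM s q)
        ((phiCM s q).2 - (phiCM s q).1, (phiCM s q).2 - (phiCM s q).1)) s := by
  have hne : (1 : ℝ) + s ≠ 0 := by linarith
  have h1s : HasDerivAt (fun t : ℝ => 1 + t) 1 s := by
    simpa using (hasDerivAt_id s).const_add 1
  have h1 : HasDerivAt (fun t : ℝ => t / (1 + t)) (((1+s)^2)⁻¹) s := by
    have := (hasDerivAt_id s).fun_div h1s hne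
    refine this.congr_deriv ?_
    field_simp
    simp
  have h2 : HasDerivAt (fun t : ℝ => 1 / (1 + t)) (-(((1+s)^2)⁻¹)) s := by
    have := (hasDerivAt_const s (1:ℝ)).fun_div h1s hne
    refine this.congr_deriv ?_
    field_simp
    simp
  have hA : HasDerivAt (fun t : ℝ => q.1 - (t / (1 + t)) • q.2)
      (-((((1+s)^2)⁻¹) • q.2)) s := (h1.smul_const q.2).const_sub q.1
  have hB : HasDerivAt (fun t : ℝ => q.1 + (1 / (1 + t)) • q.2)
      ((-(((1+s)^2)⁻¹)) • q.2) s := (h2.smul_const q.2).const_add q.1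
  have hpath : HasDerivAt (fun t : ℝ => phiCM (d := d) t q)
      ((-(((1+s)^2)⁻¹)) • ((q.2 : E), (q.2 : E))) s := by
    have := hA.prodMk hB
    convert this using 1
    · rfl
    rw [Prod.smul_mk, neg_smul]
  have hcomp := (hψdiff (phiCM s q)).hasFDerivAt.comp_hasDerivAt s hpath
  rw [ContinuousLinearMap.map_smul] at hcomp
  rwa [phiCM_snd_sub_fst hs]

lemma measurable_Dfun (ψ : E × E → ℂ) :
    Measurable (fun p : E × E => fderiv ℝ ψ p (p.2 - p.1, p.2 - p.1)) := by
  have h1 : Measurable (fderiv ℝ ψ) := measurable_fderiv ℝ ψ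
  have h2 : Measurable (fun p : E × E => ((p.2 - p.1, p.2 - p.1) : (E × E))) :=
    (measurable_snd.sub measurable_fst).prodMk (measurable_snd.sub measurable_fst)
  have heval : Continuous (fun z : ((E × E) →L[ℝ] ℂ) × (E × E) => z.1 z.2) :=
    isBoundedBilinearMap_apply.continuous
  exact heval.measurable.comp (h1.prodMk h2)

lemma L2norm_eq_lintegral {α : Type*} [MeasureSpace α] (f : α → ℂ)
    (hf : AEStronglyMeasurable f volume) :
    L2norm f = Real.sqrt ((∫⁻ x, (‖f x‖₊ : ℝ≥0∞) ^ 2).toReal) := by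
  unfold L2norm
  rw [integral_eq_lintegral_of_nonneg_ae (Filter.Eventually.of_forall fun x => sq_nonneg _)
    ((hf.norm.aemeasurable.pow_const 2).aestronglyMeasurable)]
  congr 2
  refine lintegral_congr fun x => ?_
  rw [ENNReal.ofReal_pow (norm_nonneg _), ofReal_norm, enorm_eq_nnnorm]

lemma memL2_lintegral_ne_top {α : Type*} [MeasureSpace α] {f : α → ℂ} (hf : MemLp f 2) :
    ∫⁻ x, (‖f x‖₊ : ℝ≥0∞) ^ 2 ≠ ∞ := by
  have h := hf.2
  rw [eLpNorm_eq_lintegral_rpow_enorm_toReal two_ne_zero ENNReal.ofNat_ne_top] at h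
  simp only [ENNReal.toReal_ofNat, enorm_eq_nnnorm] at h
  have h2 : ∀ x : ℝ≥0∞, x ^ (2:ℝ) = x ^ 2 := fun x => by
    rw [← ENNReal.rpow_natCast x 2]; norm_num
  have := (ENNReal.rpow_lt_top_iff_of_pos (by norm_num : (0:ℝ) < 1/2)).mp h
  rw [show (∫⁻ x, (‖f x‖₊ : ℝ≥0∞) ^ (2:ℝ) ∂volume) = ∫⁻ x, (‖f x‖₊ : ℝ≥0∞) ^ 2 ∂volume from
    lintegral_congr fun x => h2 _] at this
  exact this.ne

end Aux

section Main

open ENNReal Set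

theorem stmt2 {d : ℕ} (ε : ℝ) (hε : 0 ≤ ε)
    (ψ : EuclideanSpace ℝ (Fin d) × EuclideanSpace ℝ (Fin d) → ℂ)
    (hψ : MemLp ψ 2) (hψdiff : Differentiable ℝ ψ)
    (hψD : MemLp (fun p : EuclideanSpace ℝ (Fin d) × EuclideanSpace ℝ (Fin d) =>
      fderiv ℝ ψ p (p.2 - p.1, p.2 - p.1)) 2) :
    L2norm (fun p => Tcm ε ψ p - Tcm 0 ψ p)
      ≤ ε * L2norm (fun p : EuclideanSpace ℝ (Fin d) × EuclideanSpace ℝ (Fin d) =>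
          fderiv ℝ ψ p (p.2 - p.1, p.2 - p.1)) := by
  classical
  set D : EuclideanSpace ℝ (Fin d) × EuclideanSpace ℝ (Fin d) → ℂ :=
    fun p => fderiv ℝ ψ p (p.2 - p.1, p.2 - p.1) with hDdef
  have hDmeas : Measurable D := measurable_Dfun ψ
  set N : EuclideanSpace ℝ (Fin d) × EuclideanSpace ℝ (Fin d) → ℝ≥0∞ :=
    fun p => (‖D p‖₊ : ℝ≥0∞) with hNdef
  have hNmeas : Measurable N := hDmeas.nnnorm.coe_nnreal_ennreal
  set Itot : ℝ≥0∞ := ∫⁻ p, N p ^ 2 with hItotdef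
  have hItop : Itot ≠ ∞ := memL2_lintegral_ne_top hψD
  have hcont : Continuous ψ := hψdiff.continuous
  -- continuity of the difference
  have hTcont : ∀ e : ℝ, Continuous (Tcm e ψ) := fun e => by
    apply hcont.comp
    exact (continuous_fst.sub (continuous_snd.fun_const_smul _)).prodMk
      (continuous_fst.add (continuous_snd.fun_const_smul _))
  have hdiffcont : Continuous (fun p => Tcm ε ψ p - Tcm 0 ψ p) := (hTcont ε).sub (hTcont 0)
  -- Fubini computation
  have hGmeas : Measurable (fun z : ℝ × (EuclideanSpace ℝ (Fin d) × EuclideanSpace ℝ (Fin d)) =>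
      N (phiCM z.1 z.2) ^ 2) := (hNmeas.comp measurable_phiCM).pow_const 2
  have hswap : ∫⁻ q, (∫⁻ s in Ioc (0:ℝ) ε, N (phiCM s q) ^ 2) ∂volume
      = ENNReal.ofReal ε * Itot := by
    have hswapm : AEMeasurable
        (Function.uncurry fun (s : ℝ)
          (q : EuclideanSpace ℝ (Fin d) × EuclideanSpace ℝ (Fin d)) => N (phiCM s q) ^ 2)
        ((volume.restrict (Ioc (0:ℝ) ε)).prod volume) := hGmeas.aemeasurable
    rw [← lintegral_lintegral_swap hswapm]
    rw [setLIntegral_congr_fun measurableSet_Ioc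
      (fun s hs => (mp_phiCM hs.1.le).lintegral_comp
        (hNmeas.pow_const 2))]
    rw [setLIntegral_const, Real.volume_Ioc, sub_zero, mul_comm]
  have hHmeas : Measurable (fun q : EuclideanSpace ℝ (Fin d) × EuclideanSpace ℝ (Fin d) =>
      ∫⁻ s in Ioc (0:ℝ) ε, N (phiCM s q) ^ 2) :=
    Measurable.lintegral_prod_right' (f := fun z => N (phiCM z.2 z.1) ^ 2)
      ((hNmeas.comp (measurable_phiCM.comp measurable_swap)).pow_const 2)
  have hae : ∀ᵐ q : EuclideanSpace ℝ (Fin d) × EuclideanSpace ℝ (Fin d),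
      (∫⁻ s in Ioc (0:ℝ) ε, N (phiCM s q) ^ 2) < ∞ :=
    ae_lt_top hHmeas (by rw [hswap]; exact ENNReal.mul_ne_top ENNReal.ofReal_ne_top hItop)
  -- pointwise estimate
  have hpt : ∀ᵐ q : EuclideanSpace ℝ (Fin d) × EuclideanSpace ℝ (Fin d),
      (‖Tcm ε ψ q - Tcm 0 ψ q‖₊ : ℝ≥0∞) ^ 2
        ≤ ENNReal.ofReal ε * ∫⁻ s in Ioc (0:ℝ) ε, N (phiCM s q) ^ 2 := by
    filter_upwards [hae] with q hq
    set g' : ℝ → ℂ := fun s => (-(((1+s)^2)⁻¹)) • D (phiCM s q) with hg'def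
    have hsliceN : Measurable (fun s : ℝ => N (phiCM s q)) :=
      hNmeas.comp (measurable_phiCM.comp (measurable_id.prodMk measurable_const))
    have hg'meas : Measurable g' := by
      apply Measurable.fun_smul
      · exact (((measurable_const.add measurable_id).pow_const 2).inv).neg
      · exact hDmeas.comp (measurable_phiCM.comp (measurable_id.prodMk measurable_const))
    have hbound : ∀ s ∈ Ioc (0:ℝ) ε, (‖g' s‖₊ : ℝ≥0∞) ≤ N (phiCM s q) := by
      intro s hs
      have hs0 : (0:ℝ) ≤ s := hs.1.le
      have h1 : (1:ℝ) ≤ (1+s)^2 := by nlinarith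
      have hc : ‖(-(((1+s)^2)⁻¹))‖₊ ≤ 1 := by
        rw [← NNReal.coe_le_coe, coe_nnnorm, NNReal.coe_one, norm_neg, Real.norm_eq_abs,
          abs_inv, abs_of_pos (by positivity)]
        exact inv_le_one_of_one_le₀ h1
      have h2 : ‖(-(((1+s)^2)⁻¹)) • D (phiCM s q)‖₊ ≤ ‖D (phiCM s q)‖₊ := by
        rw [nnnorm_smul]
        exact mul_le_of_le_one_left zero_le hc
      show (‖(-(((1+s)^2)⁻¹)) • D (phiCM s q)‖₊ : ℝ≥0∞) ≤ (‖D (phiCM s q)‖₊ : ℝ≥0∞)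
      exact_mod_cast h2
    have hCS : (∫⁻ s in Ioc (0:ℝ) ε, N (phiCM s q)) ^ 2
        ≤ ENNReal.ofReal ε * ∫⁻ s in Ioc (0:ℝ) ε, N (phiCM s q) ^ 2 := by
      have h := cs_lintegral (volume.restrict (Ioc (0:ℝ) ε)) hsliceN.aemeasurable
      rwa [Measure.restrict_apply_univ, Real.volume_Ioc, sub_zero] at h
    have hKfin : (∫⁻ s in Ioc (0:ℝ) ε, N (phiCM s q)) ≠ ∞ := by
      intro hcon
      have hlt : (∫⁻ s in Ioc (0:ℝ) ε, N (phiCM s q)) ^ 2 < ∞ :=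
        lt_of_le_of_lt hCS (ENNReal.mul_lt_top ENNReal.ofReal_lt_top hq)
      rw [hcon, ENNReal.top_pow (by norm_num)] at hlt
      exact lt_irrefl _ hlt
    have hintg : IntervalIntegrable g' volume 0 ε := by
      rw [intervalIntegrable_iff_integrableOn_Ioc_of_le hε]
      refine ⟨hg'meas.aestronglyMeasurable, ?_⟩
      have hle : ∫⁻ s in Ioc (0:ℝ) ε, (‖g' s‖₊ : ℝ≥0∞)
          ≤ ∫⁻ s in Ioc (0:ℝ) ε, N (phiCM s q) := setLIntegral_mono hsliceN hbound
      exact lt_of_le_of_lt hle hKfin.lt_top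
    have hderiv : ∀ s ∈ uIcc (0:ℝ) ε, HasDerivAt (fun t => ψ (phiCM t q)) (g' s) s := by
      intro s hs
      rw [uIcc_of_le hε] at hs
      exact hasDerivAt_phiCM_comp ψ hψdiff q hs.1
    have hftc := intervalIntegral.integral_eq_sub_of_hasDerivAt hderiv hintg
    have hdiff_eq : Tcm ε ψ q - Tcm 0 ψ q = ∫ s in Ioc (0:ℝ) ε, g' s := by
      rw [← intervalIntegral.integral_of_le hε, hftc]
      rfl
    calc (‖Tcm ε ψ q - Tcm 0 ψ q‖₊ : ℝ≥0∞) ^ 2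
        = (‖∫ s in Ioc (0:ℝ) ε, g' s‖₊ : ℝ≥0∞) ^ 2 := by rw [hdiff_eq]
      _ ≤ (∫⁻ s in Ioc (0:ℝ) ε, (‖g' s‖₊ : ℝ≥0∞)) ^ 2 :=
          pow_le_pow_left' (enorm_integral_le_lintegral_enorm _) 2
      _ ≤ (∫⁻ s in Ioc (0:ℝ) ε, N (phiCM s q)) ^ 2 :=
          pow_le_pow_left' (setLIntegral_mono hsliceN hbound) 2
      _ ≤ ENNReal.ofReal ε * ∫⁻ s in Ioc (0:ℝ) ε, N (phiCM s q) ^ 2 := hCS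
  -- global estimate
  have key : (∫⁻ q, (‖Tcm ε ψ q - Tcm 0 ψ q‖₊ : ℝ≥0∞) ^ 2)
      ≤ ENNReal.ofReal ε ^ 2 * Itot := by
    calc (∫⁻ q, (‖Tcm ε ψ q - Tcm 0 ψ q‖₊ : ℝ≥0∞) ^ 2)
        ≤ ∫⁻ q, ENNReal.ofReal ε * ∫⁻ s in Ioc (0:ℝ) ε, N (phiCM s q) ^ 2 :=
          lintegral_mono_ae hpt
      _ = ENNReal.ofReal ε * ∫⁻ q, ∫⁻ s in Ioc (0:ℝ) ε, N (phiCM s q) ^ 2 :=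
          lintegral_const_mul _ hHmeas
      _ = ENNReal.ofReal ε * (ENNReal.ofReal ε * Itot) := by rw [hswap]
      _ = ENNReal.ofReal ε ^ 2 * Itot := by ring
  -- conclusion
  rw [L2norm_eq_lintegral _ hdiffcont.aestronglyMeasurable,
    L2norm_eq_lintegral _ hDmeas.aestronglyMeasurable]
  have hfin : ENNReal.ofReal ε ^ 2 * Itot ≠ ∞ :=
    ENNReal.mul_ne_top (ENNReal.pow_ne_top ENNReal.ofReal_ne_top) hItop
  have hA : (∫⁻ q, (‖Tcm ε ψ q - Tcm 0 ψ q‖₊ : ℝ≥0∞) ^ 2).toReal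
      ≤ ε ^ 2 * Itot.toReal := by
    calc (∫⁻ q, (‖Tcm ε ψ q - Tcm 0 ψ q‖₊ : ℝ≥0∞) ^ 2).toReal
        ≤ (ENNReal.ofReal ε ^ 2 * Itot).toReal := ENNReal.toReal_mono hfin key
      _ = ε ^ 2 * Itot.toReal := by
          rw [ENNReal.toReal_mul, ENNReal.toReal_pow, ENNReal.toReal_ofReal hε]
  calc Real.sqrt ((∫⁻ q, (‖Tcm ε ψ q - Tcm 0 ψ q‖₊ : ℝ≥0∞) ^ 2).toReal)
      ≤ Real.sqrt (ε ^ 2 * Itot.toReal) := Real.sqrt_le_sqrt hA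
    _ = ε * Real.sqrt Itot.toReal := by
        rw [Real.sqrt_mul (sq_nonneg ε), Real.sqrt_sq hε]

end Main
end

section
/- In dimension one, with scattering amplitudes $t_k, r_k$ satisfying the unitarity relations $|t_k|^2 + |r_k|^2 = 1$, $r_k\overline{t_{-k}} + t_k\overline{r_{-k}} = 0$, $|r_k| = |r_{-k}|$, and with translated scattering operators $S^X = \theta_X S \theta_{-X}$, the collision function $I_\chi(X,X') := \langle S^{X'}\chi \,|\, S^X\chi\rangle$ admits the decomposition $I_\chi(X,X') = 1 - \Theta_\chi(X - X') + i\,\Gamma_\chi(X) - i\,\Gamma_\chi(X')$, where $\Theta_\chi(Y) := \int_{\mathbb{R}} (1 - e^{2ikY})\,|r_k|^2\,|\widehat\chi(k)|^2\,dk$ and $\Gamma_\chi(X) := i\int_{\mathbb{R}} e^{2ikX}\,\overline{r_{-k}}\,t_k\,\overline{\widehat\chi(-k)}\,\widehat\chi(k)\,dk$. -/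
open MeasureTheory Complex

private lemma nexp_pos (x : ℝ) : ‖Complex.exp (2 * Complex.I * (x : ℂ))‖ = 1 := by
  rw [Complex.norm_exp]; simp

private lemma nexp_neg (x : ℝ) : ‖Complex.exp ((-2) * Complex.I * (x : ℂ))‖ = 1 := by
  rw [Complex.norm_exp]; simp

private lemma conj_exp_neg (x : ℝ) :
    (starRingEnd ℂ) (Complex.exp ((-2) * Complex.I * (x : ℂ)))
      = Complex.exp (2 * Complex.I * (x : ℂ)) := by
  rw [← Complex.exp_conj, map_mul, map_mul, map_neg, map_ofNat, Complex.conj_I,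
    Complex.conj_ofReal]
  ring_nf

private lemma mexp_pos (X : ℝ) :
    Measurable fun k : ℝ => Complex.exp (2 * Complex.I * ((k * X : ℝ) : ℂ)) :=
  Complex.measurable_exp.comp
    ((Complex.measurable_ofReal.comp (measurable_id.mul_const X)).const_mul (2 * Complex.I))

private lemma mexp_neg (X : ℝ) :
    Measurable fun k : ℝ => Complex.exp ((-2) * Complex.I * ((k * X : ℝ) : ℂ)) :=
  Complex.measurable_exp.comp
    ((Complex.measurable_ofReal.comp (measurable_id.mul_const X)).const_mul ((-2) * Complex.I))

private lemma mconj {f : ℝ → ℂ} (hf : Measurable f) :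
    Measurable fun k => (starRingEnd ℂ) (f k) :=
  Complex.continuous_conj.measurable.comp hf

private lemma normsq_coe (a : ℝ) : ‖((a ^ 2 : ℝ) : ℂ)‖ = a ^ 2 := by
  rw [Complex.norm_real]
  exact abs_of_nonneg (sq_nonneg a)

/-- decomposition of the collision function: with the translated
scattering operators acting in Fourier variables by
`Ŝ^Xχ(k) = t_k χ̂(k) + e^{-2ikX} r_{-k} χ̂(-k)` and `χ̂ = ch` normalized in `L²`,
the collision function `I_χ(X,X') = ⟨S^{X'}χ | S^Xχ⟩` (computed in Fourier
variables) equals `1 - Θ_χ(X-X') + iΓ_χ(X) - iΓ_χ(X')`. -/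
theorem stmt5 (t r ch : ℝ → ℂ)
    (ht : Measurable t) (hr : Measurable r) (hch : Measurable ch)
    (hint : Integrable (fun k : ℝ => ‖ch k‖ ^ 2))
    (hnorm : ∫ k : ℝ, ‖ch k‖ ^ 2 = 1)
    (hunit1 : ∀ k : ℝ, k ≠ 0 → ‖t k‖ ^ 2 + ‖r k‖ ^ 2 = 1)
    (hunit2 : ∀ k : ℝ, k ≠ 0 →
      r k * (starRingEnd ℂ) (t (-k)) + t k * (starRingEnd ℂ) (r (-k)) = 0)
    (hunit3 : ∀ k : ℝ, k ≠ 0 → ‖r k‖ = ‖r (-k)‖) :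
    ∀ X X' : ℝ,
      (∫ k : ℝ,
        (starRingEnd ℂ)
            (t k * ch k + Complex.exp ((-2) * Complex.I * ((k * X' : ℝ) : ℂ)) * r (-k) * ch (-k))
          * (t k * ch k + Complex.exp ((-2) * Complex.I * ((k * X : ℝ) : ℂ)) * r (-k) * ch (-k)))
      = 1
        - (∫ k : ℝ, (1 - Complex.exp (2 * Complex.I * ((k * (X - X') : ℝ) : ℂ)))
            * ((‖r k‖ ^ 2 : ℝ) : ℂ) * ((‖ch k‖ ^ 2 : ℝ) : ℂ))
        + Complex.I * (Complex.I * ∫ k : ℝ,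
            Complex.exp (2 * Complex.I * ((k * X : ℝ) : ℂ)) * (starRingEnd ℂ) (r (-k)) * t k
              * (starRingEnd ℂ) (ch (-k)) * ch k)
        - Complex.I * (Complex.I * ∫ k : ℝ,
            Complex.exp (2 * Complex.I * ((k * X' : ℝ) : ℂ)) * (starRingEnd ℂ) (r (-k)) * t k
              * (starRingEnd ℂ) (ch (-k)) * ch k) := by
  have hae : ∀ᵐ k : ℝ, k ≠ 0 := by rw [ae_iff]; simp [not_not]
  have htle : ∀ᵐ k : ℝ, ‖t k‖ ≤ 1 := by
    filter_upwards [hae] with k hk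
    nlinarith [hunit1 k hk, norm_nonneg (t k), norm_nonneg (r k)]
  have hrle : ∀ᵐ k : ℝ, ‖r k‖ ≤ 1 := by
    filter_upwards [hae] with k hk
    nlinarith [hunit1 k hk, norm_nonneg (t k), norm_nonneg (r k)]
  have hrle' : ∀ᵐ k : ℝ, ‖r (-k)‖ ≤ 1 := by
    filter_upwards [hae] with k hk
    nlinarith [hunit1 (-k) (neg_ne_zero.mpr hk), norm_nonneg (t (-k)), norm_nonneg (r (-k))]
  have hdom : Integrable (fun k : ℝ => ‖ch k‖ ^ 2 + ‖ch (-k)‖ ^ 2) :=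
    hint.add hint.comp_neg
  have key : ∀ f : ℝ → ℂ, AEStronglyMeasurable f volume →
      (∀ᵐ k : ℝ, ‖f k‖ ≤ ‖ch k‖ ^ 2 + ‖ch (-k)‖ ^ 2) → Integrable f := by
    intro f hf hb
    refine hdom.mono hf ?_
    filter_upwards [hb] with k hk
    refine hk.trans ?_
    rw [Real.norm_eq_abs]
    exact le_abs_self _
  intro X X'
  -- integrability of the four expansion terms
  have hi1 : Integrable (fun k : ℝ =>
      (starRingEnd ℂ) (t k) * (starRingEnd ℂ) (ch k) * t k * ch k) := by
    refine key _ ((((mconj ht).mul (mconj hch)).mul ht).mul hch).aestronglyMeasurable ?_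
    filter_upwards [htle] with k hk
    have h1 : ‖(starRingEnd ℂ) (t k) * (starRingEnd ℂ) (ch k) * t k * ch k‖
        = ‖t k‖ * ‖ch k‖ * ‖t k‖ * ‖ch k‖ := by
      simp only [norm_mul, RCLike.norm_conj]
    rw [h1]
    have ht2 : ‖t k‖ ^ 2 ≤ 1 := by nlinarith [norm_nonneg (t k)]
    nlinarith [ht2, sq_nonneg (‖ch k‖), sq_nonneg (‖ch (-k)‖), norm_nonneg (ch k)]
  have hi2 : Integrable (fun k : ℝ =>
      (starRingEnd ℂ) (t k) * (starRingEnd ℂ) (ch k) *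
        Complex.exp ((-2) * Complex.I * ((k * X : ℝ) : ℂ)) * r (-k) * ch (-k)) := by
    refine key _ (((((mconj ht).mul (mconj hch)).mul (mexp_neg X)).mul
      (hr.comp measurable_neg)).mul (hch.comp measurable_neg)).aestronglyMeasurable ?_
    filter_upwards [htle, hrle'] with k hk1 hk2
    have h1 : ‖(starRingEnd ℂ) (t k) * (starRingEnd ℂ) (ch k) *
        Complex.exp ((-2) * Complex.I * ((k * X : ℝ) : ℂ)) * r (-k) * ch (-k)‖
        = ‖t k‖ * ‖ch k‖ * 1 * ‖r (-k)‖ * ‖ch (-k)‖ := by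
      simp only [norm_mul, RCLike.norm_conj, nexp_neg]
    rw [h1]
    have htr : ‖t k‖ * ‖r (-k)‖ ≤ 1 := by
      nlinarith [norm_nonneg (t k), norm_nonneg (r (-k))]
    nlinarith [htr, mul_nonneg (norm_nonneg (ch k)) (norm_nonneg (ch (-k))),
      sq_nonneg (‖ch k‖ - ‖ch (-k)‖)]
  have hi3 : ∀ Z : ℝ, Integrable (fun k : ℝ =>
      Complex.exp (2 * Complex.I * ((k * Z : ℝ) : ℂ)) * (starRingEnd ℂ) (r (-k)) * t k
        * (starRingEnd ℂ) (ch (-k)) * ch k) := by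
    intro Z
    refine key _ (((((mexp_pos Z).mul (mconj (hr.comp measurable_neg))).mul ht).mul
      (mconj (hch.comp measurable_neg))).mul hch).aestronglyMeasurable ?_
    filter_upwards [htle, hrle'] with k hk1 hk2
    have h1 : ‖Complex.exp (2 * Complex.I * ((k * Z : ℝ) : ℂ)) * (starRingEnd ℂ) (r (-k)) * t k
        * (starRingEnd ℂ) (ch (-k)) * ch k‖
        = 1 * ‖r (-k)‖ * ‖t k‖ * ‖ch (-k)‖ * ‖ch k‖ := by
      simp only [norm_mul, RCLike.norm_conj, nexp_pos]
    rw [h1]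
    have htr : ‖t k‖ * ‖r (-k)‖ ≤ 1 := by
      nlinarith [norm_nonneg (t k), norm_nonneg (r (-k))]
    nlinarith [htr, mul_nonneg (norm_nonneg (ch k)) (norm_nonneg (ch (-k))),
      sq_nonneg (‖ch k‖ - ‖ch (-k)‖)]
  have hi4 : Integrable (fun k : ℝ =>
      Complex.exp (2 * Complex.I * ((k * X' : ℝ) : ℂ)) *
        Complex.exp ((-2) * Complex.I * ((k * X : ℝ) : ℂ)) *
        (starRingEnd ℂ) (r (-k)) * (starRingEnd ℂ) (ch (-k)) * r (-k) * ch (-k)) := by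
    refine key _ ((((((mexp_pos X').mul (mexp_neg X)).mul
      (mconj (hr.comp measurable_neg))).mul (mconj (hch.comp measurable_neg))).mul
      (hr.comp measurable_neg)).mul (hch.comp measurable_neg)).aestronglyMeasurable ?_
    filter_upwards [hrle'] with k hk
    have h1 : ‖Complex.exp (2 * Complex.I * ((k * X' : ℝ) : ℂ)) *
        Complex.exp ((-2) * Complex.I * ((k * X : ℝ) : ℂ)) *
        (starRingEnd ℂ) (r (-k)) * (starRingEnd ℂ) (ch (-k)) * r (-k) * ch (-k)‖
        = 1 * 1 * ‖r (-k)‖ * ‖ch (-k)‖ * ‖r (-k)‖ * ‖ch (-k)‖ := by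
      simp only [norm_mul, RCLike.norm_conj, nexp_pos, nexp_neg]
    rw [h1]
    have hr2 : ‖r (-k)‖ ^ 2 ≤ 1 := by nlinarith [norm_nonneg (r (-k))]
    nlinarith [hr2, sq_nonneg (‖ch (-k)‖), sq_nonneg (‖ch k‖), norm_nonneg (ch (-k))]
  have hg : Integrable (fun k : ℝ => ((‖r k‖ ^ 2 : ℝ) : ℂ) * ((‖ch k‖ ^ 2 : ℝ) : ℂ)) := by
    refine key _ (((Complex.measurable_ofReal.comp ((hr.norm).pow_const 2)).mul
      (Complex.measurable_ofReal.comp ((hch.norm).pow_const 2))).aestronglyMeasurable) ?_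
    filter_upwards [hrle] with k hk
    have h1 : ‖((‖r k‖ ^ 2 : ℝ) : ℂ) * ((‖ch k‖ ^ 2 : ℝ) : ℂ)‖ = ‖r k‖ ^ 2 * ‖ch k‖ ^ 2 := by
      rw [norm_mul, normsq_coe, normsq_coe]
    rw [h1]
    have hr2 : ‖r k‖ ^ 2 ≤ 1 := by nlinarith [norm_nonneg (r k)]
    nlinarith [hr2, sq_nonneg (‖ch k‖), sq_nonneg (‖ch (-k)‖)]
  have hEYg : Integrable (fun k : ℝ =>
      Complex.exp (2 * Complex.I * ((k * (X - X') : ℝ) : ℂ)) *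
        (((‖r k‖ ^ 2 : ℝ) : ℂ) * ((‖ch k‖ ^ 2 : ℝ) : ℂ))) := by
    refine key _ (((mexp_pos (X - X')).mul
      ((Complex.measurable_ofReal.comp ((hr.norm).pow_const 2)).mul
      (Complex.measurable_ofReal.comp ((hch.norm).pow_const 2)))).aestronglyMeasurable) ?_
    filter_upwards [hrle] with k hk
    have h1 : ‖Complex.exp (2 * Complex.I * ((k * (X - X') : ℝ) : ℂ)) *
        (((‖r k‖ ^ 2 : ℝ) : ℂ) * ((‖ch k‖ ^ 2 : ℝ) : ℂ))‖
        = 1 * (‖r k‖ ^ 2 * ‖ch k‖ ^ 2) := by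
      rw [norm_mul, norm_mul, normsq_coe, normsq_coe, nexp_pos]
    rw [h1]
    have hr2 : ‖r k‖ ^ 2 ≤ 1 := by nlinarith [norm_nonneg (r k)]
    nlinarith [hr2, sq_nonneg (‖ch k‖), sq_nonneg (‖ch (-k)‖)]
  -- split the left-hand side
  have expand : (∫ k : ℝ,
        (starRingEnd ℂ)
            (t k * ch k + Complex.exp ((-2) * Complex.I * ((k * X' : ℝ) : ℂ)) * r (-k) * ch (-k))
          * (t k * ch k + Complex.exp ((-2) * Complex.I * ((k * X : ℝ) : ℂ)) * r (-k) * ch (-k)))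
      = ∫ k : ℝ, ((starRingEnd ℂ) (t k) * (starRingEnd ℂ) (ch k) * t k * ch k
        + ((starRingEnd ℂ) (t k) * (starRingEnd ℂ) (ch k) *
            Complex.exp ((-2) * Complex.I * ((k * X : ℝ) : ℂ)) * r (-k) * ch (-k)
        + (Complex.exp (2 * Complex.I * ((k * X' : ℝ) : ℂ)) * (starRingEnd ℂ) (r (-k))
            * t k * (starRingEnd ℂ) (ch (-k)) * ch k
        + Complex.exp (2 * Complex.I * ((k * X' : ℝ) : ℂ)) *
            Complex.exp ((-2) * Complex.I * ((k * X : ℝ) : ℂ)) *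
            (starRingEnd ℂ) (r (-k)) * (starRingEnd ℂ) (ch (-k)) * r (-k) * ch (-k)))) := by
    refine integral_congr_ae (Filter.Eventually.of_forall fun k => ?_)
    simp only [map_add, map_mul, conj_exp_neg]
    ring
  have addA : (∫ k : ℝ, (Complex.exp (2 * Complex.I * ((k * X' : ℝ) : ℂ)) *
        (starRingEnd ℂ) (r (-k)) * t k * (starRingEnd ℂ) (ch (-k)) * ch k
        + Complex.exp (2 * Complex.I * ((k * X' : ℝ) : ℂ)) *
            Complex.exp ((-2) * Complex.I * ((k * X : ℝ) : ℂ)) *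
            (starRingEnd ℂ) (r (-k)) * (starRingEnd ℂ) (ch (-k)) * r (-k) * ch (-k)))
      = (∫ k : ℝ, Complex.exp (2 * Complex.I * ((k * X' : ℝ) : ℂ)) *
            (starRingEnd ℂ) (r (-k)) * t k * (starRingEnd ℂ) (ch (-k)) * ch k)
        + ∫ k : ℝ, Complex.exp (2 * Complex.I * ((k * X' : ℝ) : ℂ)) *
            Complex.exp ((-2) * Complex.I * ((k * X : ℝ) : ℂ)) *
            (starRingEnd ℂ) (r (-k)) * (starRingEnd ℂ) (ch (-k)) * r (-k) * ch (-k) :=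
    integral_add (hi3 X') hi4
  have addB : (∫ k : ℝ, ((starRingEnd ℂ) (t k) * (starRingEnd ℂ) (ch k) *
        Complex.exp ((-2) * Complex.I * ((k * X : ℝ) : ℂ)) * r (-k) * ch (-k)
        + (Complex.exp (2 * Complex.I * ((k * X' : ℝ) : ℂ)) *
            (starRingEnd ℂ) (r (-k)) * t k * (starRingEnd ℂ) (ch (-k)) * ch k
        + Complex.exp (2 * Complex.I * ((k * X' : ℝ) : ℂ)) *
            Complex.exp ((-2) * Complex.I * ((k * X : ℝ) : ℂ)) *
            (starRingEnd ℂ) (r (-k)) * (starRingEnd ℂ) (ch (-k)) * r (-k) * ch (-k))))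
      = (∫ k : ℝ, (starRingEnd ℂ) (t k) * (starRingEnd ℂ) (ch k) *
            Complex.exp ((-2) * Complex.I * ((k * X : ℝ) : ℂ)) * r (-k) * ch (-k))
        + ∫ k : ℝ, (Complex.exp (2 * Complex.I * ((k * X' : ℝ) : ℂ)) *
            (starRingEnd ℂ) (r (-k)) * t k * (starRingEnd ℂ) (ch (-k)) * ch k
        + Complex.exp (2 * Complex.I * ((k * X' : ℝ) : ℂ)) *
            Complex.exp ((-2) * Complex.I * ((k * X : ℝ) : ℂ)) *
            (starRingEnd ℂ) (r (-k)) * (starRingEnd ℂ) (ch (-k)) * r (-k) * ch (-k)) :=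
    integral_add hi2 ((hi3 X').add hi4)
  have addC : (∫ k : ℝ, ((starRingEnd ℂ) (t k) * (starRingEnd ℂ) (ch k) * t k * ch k
        + ((starRingEnd ℂ) (t k) * (starRingEnd ℂ) (ch k) *
            Complex.exp ((-2) * Complex.I * ((k * X : ℝ) : ℂ)) * r (-k) * ch (-k)
        + (Complex.exp (2 * Complex.I * ((k * X' : ℝ) : ℂ)) * (starRingEnd ℂ) (r (-k))
            * t k * (starRingEnd ℂ) (ch (-k)) * ch k
        + Complex.exp (2 * Complex.I * ((k * X' : ℝ) : ℂ)) *
            Complex.exp ((-2) * Complex.I * ((k * X : ℝ) : ℂ)) *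
            (starRingEnd ℂ) (r (-k)) * (starRingEnd ℂ) (ch (-k)) * r (-k) * ch (-k)))))
      = (∫ k : ℝ, (starRingEnd ℂ) (t k) * (starRingEnd ℂ) (ch k) * t k * ch k)
        + ∫ k : ℝ, ((starRingEnd ℂ) (t k) * (starRingEnd ℂ) (ch k) *
            Complex.exp ((-2) * Complex.I * ((k * X : ℝ) : ℂ)) * r (-k) * ch (-k)
        + (Complex.exp (2 * Complex.I * ((k * X' : ℝ) : ℂ)) *
            (starRingEnd ℂ) (r (-k)) * t k * (starRingEnd ℂ) (ch (-k)) * ch k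
        + Complex.exp (2 * Complex.I * ((k * X' : ℝ) : ℂ)) *
            Complex.exp ((-2) * Complex.I * ((k * X : ℝ) : ℂ)) *
            (starRingEnd ℂ) (r (-k)) * (starRingEnd ℂ) (ch (-k)) * r (-k) * ch (-k))) :=
    integral_add hi1 (hi2.add ((hi3 X').add hi4))
  -- evaluate term 1
  have hv1 : (∫ k : ℝ, (starRingEnd ℂ) (t k) * (starRingEnd ℂ) (ch k) * t k * ch k)
      = 1 - ∫ k : ℝ, ((‖r k‖ ^ 2 : ℝ) : ℂ) * ((‖ch k‖ ^ 2 : ℝ) : ℂ) := by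
    have e1 : (∫ k : ℝ, (starRingEnd ℂ) (t k) * (starRingEnd ℂ) (ch k) * t k * ch k)
        = ∫ k : ℝ, (((‖ch k‖ ^ 2 : ℝ) : ℂ)
            - ((‖r k‖ ^ 2 : ℝ) : ℂ) * ((‖ch k‖ ^ 2 : ℝ) : ℂ)) := by
      refine integral_congr_ae ?_
      filter_upwards [hae] with k hk
      have h1 := hunit1 k hk
      have ha : (starRingEnd ℂ) (t k) * t k = ((‖t k‖ : ℂ)) ^ 2 := RCLike.conj_mul (t k)
      have hb : (starRingEnd ℂ) (ch k) * ch k = ((‖ch k‖ : ℂ)) ^ 2 := RCLike.conj_mul (ch k)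
      have ht2 : (‖t k‖ : ℝ) ^ 2 = 1 - ‖r k‖ ^ 2 := by linarith
      calc (starRingEnd ℂ) (t k) * (starRingEnd ℂ) (ch k) * t k * ch k
          = ((starRingEnd ℂ) (t k) * t k) * ((starRingEnd ℂ) (ch k) * ch k) := by ring
        _ = ((‖t k‖ : ℂ)) ^ 2 * ((‖ch k‖ : ℂ)) ^ 2 := by rw [ha, hb]
        _ = (((‖t k‖ ^ 2 : ℝ)) : ℂ) * ((‖ch k‖ ^ 2 : ℝ) : ℂ) := by push_cast; ring
        _ = (((1 - ‖r k‖ ^ 2 : ℝ)) : ℂ) * ((‖ch k‖ ^ 2 : ℝ) : ℂ) := by rw [ht2]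
        _ = ((‖ch k‖ ^ 2 : ℝ) : ℂ) - ((‖r k‖ ^ 2 : ℝ) : ℂ) * ((‖ch k‖ ^ 2 : ℝ) : ℂ) := by
            push_cast; ring
    have hsub : (∫ k : ℝ, (((‖ch k‖ ^ 2 : ℝ) : ℂ)
          - ((‖r k‖ ^ 2 : ℝ) : ℂ) * ((‖ch k‖ ^ 2 : ℝ) : ℂ)))
        = (∫ k : ℝ, ((‖ch k‖ ^ 2 : ℝ) : ℂ))
          - ∫ k : ℝ, ((‖r k‖ ^ 2 : ℝ) : ℂ) * ((‖ch k‖ ^ 2 : ℝ) : ℂ) :=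
      integral_sub hint.ofReal hg
    have hone : (∫ k : ℝ, ((‖ch k‖ ^ 2 : ℝ) : ℂ)) = 1 := by
      have h2 : (∫ k : ℝ, ((‖ch k‖ ^ 2 : ℝ) : ℂ)) = ((∫ k : ℝ, ‖ch k‖ ^ 2 : ℝ) : ℂ) :=
        integral_ofReal
      rw [h2, hnorm]
      norm_num
    rw [e1, hsub, hone]
  -- evaluate term 2 via k ↦ -k and unitarity
  have hv2 : (∫ k : ℝ, (starRingEnd ℂ) (t k) * (starRingEnd ℂ) (ch k) *
        Complex.exp ((-2) * Complex.I * ((k * X : ℝ) : ℂ)) * r (-k) * ch (-k))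
      = - ∫ k : ℝ, Complex.exp (2 * Complex.I * ((k * X : ℝ) : ℂ)) * (starRingEnd ℂ) (r (-k))
          * t k * (starRingEnd ℂ) (ch (-k)) * ch k := by
    have e1 : (∫ k : ℝ, (starRingEnd ℂ) (t k) * (starRingEnd ℂ) (ch k) *
          Complex.exp ((-2) * Complex.I * ((k * X : ℝ) : ℂ)) * r (-k) * ch (-k))
        = ∫ k : ℝ, (fun j : ℝ => Complex.exp (2 * Complex.I * ((j * X : ℝ) : ℂ)) *
            (starRingEnd ℂ) (t (-j)) * (starRingEnd ℂ) (ch (-j)) * r j * ch j) (-k) := by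
      refine integral_congr_ae (Filter.Eventually.of_forall fun k => ?_)
      simp only [neg_neg]
      have he : Complex.exp (2 * Complex.I * (((-k) * X : ℝ) : ℂ))
          = Complex.exp ((-2) * Complex.I * ((k * X : ℝ) : ℂ)) := by
        congr 1; push_cast; ring
      rw [he]; ring
    have e2 : (∫ k : ℝ, (fun j : ℝ => Complex.exp (2 * Complex.I * ((j * X : ℝ) : ℂ)) *
          (starRingEnd ℂ) (t (-j)) * (starRingEnd ℂ) (ch (-j)) * r j * ch j) (-k))
        = ∫ k : ℝ, Complex.exp (2 * Complex.I * ((k * X : ℝ) : ℂ)) *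
          (starRingEnd ℂ) (t (-k)) * (starRingEnd ℂ) (ch (-k)) * r k * ch k :=
      integral_neg_eq_self (fun j : ℝ => Complex.exp (2 * Complex.I * ((j * X : ℝ) : ℂ)) *
        (starRingEnd ℂ) (t (-j)) * (starRingEnd ℂ) (ch (-j)) * r j * ch j) volume
    have e3 : (∫ k : ℝ, Complex.exp (2 * Complex.I * ((k * X : ℝ) : ℂ)) *
          (starRingEnd ℂ) (t (-k)) * (starRingEnd ℂ) (ch (-k)) * r k * ch k)
        = ∫ k : ℝ, -(Complex.exp (2 * Complex.I * ((k * X : ℝ) : ℂ)) * (starRingEnd ℂ) (r (-k))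
          * t k * (starRingEnd ℂ) (ch (-k)) * ch k) := by
      refine integral_congr_ae ?_
      filter_upwards [hae] with k hk
      have h2 := hunit2 k hk
      linear_combination (Complex.exp (2 * Complex.I * ((k * X : ℝ) : ℂ)) *
        (starRingEnd ℂ) (ch (-k)) * ch k) * h2
    rw [e1, e2, e3, integral_neg]
  -- evaluate term 4 via k ↦ -k
  have hv4 : (∫ k : ℝ, Complex.exp (2 * Complex.I * ((k * X' : ℝ) : ℂ)) *
        Complex.exp ((-2) * Complex.I * ((k * X : ℝ) : ℂ)) *
        (starRingEnd ℂ) (r (-k)) * (starRingEnd ℂ) (ch (-k)) * r (-k) * ch (-k))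
      = ∫ k : ℝ, Complex.exp (2 * Complex.I * ((k * (X - X') : ℝ) : ℂ)) *
          (((‖r k‖ ^ 2 : ℝ) : ℂ) * ((‖ch k‖ ^ 2 : ℝ) : ℂ)) := by
    have e1 : (∫ k : ℝ, Complex.exp (2 * Complex.I * ((k * X' : ℝ) : ℂ)) *
          Complex.exp ((-2) * Complex.I * ((k * X : ℝ) : ℂ)) *
          (starRingEnd ℂ) (r (-k)) * (starRingEnd ℂ) (ch (-k)) * r (-k) * ch (-k))
        = ∫ k : ℝ, (fun j : ℝ => Complex.exp (2 * Complex.I * ((j * (X - X') : ℝ) : ℂ)) *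
            (((‖r j‖ ^ 2 : ℝ) : ℂ) * ((‖ch j‖ ^ 2 : ℝ) : ℂ))) (-k) := by
      refine integral_congr_ae (Filter.Eventually.of_forall fun k => ?_)
      simp only
      have he : Complex.exp (2 * Complex.I * (((-k) * (X - X') : ℝ) : ℂ))
          = Complex.exp (2 * Complex.I * ((k * X' : ℝ) : ℂ)) *
            Complex.exp ((-2) * Complex.I * ((k * X : ℝ) : ℂ)) := by
        rw [← Complex.exp_add]; congr 1; push_cast; ring
      have ha : (starRingEnd ℂ) (r (-k)) * r (-k) = ((‖r (-k)‖ : ℂ)) ^ 2 :=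
        RCLike.conj_mul (r (-k))
      have hb : (starRingEnd ℂ) (ch (-k)) * ch (-k) = ((‖ch (-k)‖ : ℂ)) ^ 2 :=
        RCLike.conj_mul (ch (-k))
      rw [he]
      calc Complex.exp (2 * Complex.I * ((k * X' : ℝ) : ℂ)) *
            Complex.exp ((-2) * Complex.I * ((k * X : ℝ) : ℂ)) *
            (starRingEnd ℂ) (r (-k)) * (starRingEnd ℂ) (ch (-k)) * r (-k) * ch (-k)
          = Complex.exp (2 * Complex.I * ((k * X' : ℝ) : ℂ)) *
            Complex.exp ((-2) * Complex.I * ((k * X : ℝ) : ℂ)) *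
            (((starRingEnd ℂ) (r (-k)) * r (-k)) * ((starRingEnd ℂ) (ch (-k)) * ch (-k))) := by
            ring
        _ = Complex.exp (2 * Complex.I * ((k * X' : ℝ) : ℂ)) *
            Complex.exp ((-2) * Complex.I * ((k * X : ℝ) : ℂ)) *
            (((‖r (-k)‖ ^ 2 : ℝ) : ℂ) * ((‖ch (-k)‖ ^ 2 : ℝ) : ℂ)) := by
            rw [ha, hb]; push_cast; ring
    exact e1.trans (integral_neg_eq_self
      (fun j : ℝ => Complex.exp (2 * Complex.I * ((j * (X - X') : ℝ) : ℂ)) *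
        (((‖r j‖ ^ 2 : ℝ) : ℂ) * ((‖ch j‖ ^ 2 : ℝ) : ℂ))) volume)
  -- now put everything together
  have hθ : (∫ k : ℝ, (1 - Complex.exp (2 * Complex.I * ((k * (X - X') : ℝ) : ℂ)))
        * ((‖r k‖ ^ 2 : ℝ) : ℂ) * ((‖ch k‖ ^ 2 : ℝ) : ℂ))
      = (∫ k : ℝ, ((‖r k‖ ^ 2 : ℝ) : ℂ) * ((‖ch k‖ ^ 2 : ℝ) : ℂ))
        - ∫ k : ℝ, Complex.exp (2 * Complex.I * ((k * (X - X') : ℝ) : ℂ)) *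
            (((‖r k‖ ^ 2 : ℝ) : ℂ) * ((‖ch k‖ ^ 2 : ℝ) : ℂ)) := by
    rw [← integral_sub hg hEYg]
    refine integral_congr_ae (Filter.Eventually.of_forall fun k => ?_)
    ring
  have hII : ∀ z : ℂ, Complex.I * (Complex.I * z) = -z := fun z => by
    rw [← mul_assoc, Complex.I_mul_I]; ring
  rw [expand, addC, addB, addA, hv1, hv2, hv4, hθ, hII, hII]
  ring
end

section
/- Let $A$ be a self-adjoint trace-class operator on a Hilbert space of the form $A = P - \gamma$, where $P$ is a rank-one orthogonal projection, $\gamma \ge 0$ is a positive operator, and $\mathrm{Tr}\,A = 0$. Then $A$ has at most one positive eigenvalue (counted without multiplicity as an eigenvalue, i.e. the positive part of $A$ has rank at most one), and consequently $\|A\|_{\mathcal{L}^1} = 2\|A\|_{op} \le 2\|A\|_{HS}$, where $\|\cdot\|_{\mathcal{L}^1}$, $\|\cdot\|_{op}$, $\|\cdot\|_{HS}$ denote the trace-class, operator, and Hilbert–Schmidt norms. -/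
open MeasureTheory

lemma aux_key (c : ℝ) (z : ℂ) : ((c:ℂ) * z * ((starRingEnd ℂ) z)).re = c * ‖z‖^2 := by
  rw [mul_assoc, Complex.mul_conj]
  rw [← Complex.ofReal_mul, Complex.ofReal_re, Complex.normSq_eq_norm_sq]

lemma aux_quad {H : Type*} [NormedAddCommGroup H] [InnerProductSpace ℂ H]
    {ι : Type*} [DecidableEq ι]
    (e : ι → H) (he : Orthonormal ℂ e)
    (lam : ι → ℝ) (A : H →L[ℂ] H)
    (hA : ∀ x : H, A x = ∑' i, ((lam i : ℂ) * (inner ℂ (e i) x : ℂ)) • e i)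
    {i j : ι} (hij : i ≠ j) (a b : ℂ) :
    (inner ℂ (a • e i + b • e j) (A (a • e i + b • e j)) : ℂ).re
      = lam i * ‖a‖ ^ 2 + lam j * ‖b‖ ^ 2 := by
  have hone := orthonormal_iff_ite.mp he
  set x := a • e i + b • e j with hx
  have hAx : A x = ((lam i : ℂ) * a) • e i + ((lam j : ℂ) * b) • e j := by
    rw [hA x]
    have hzero : ∀ k ∉ ({i, j} : Finset ι),
        ((lam k : ℂ) * (inner ℂ (e k) x : ℂ)) • e k = 0 := by
      intro k hk
      simp only [Finset.mem_insert, Finset.mem_singleton, not_or] at hk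
      have h1 : (inner ℂ (e k) x : ℂ) = 0 := by
        simp [hx, inner_add_right, inner_smul_right, hone, hk.1, hk.2]
      simp [h1]
    rw [tsum_eq_sum hzero, Finset.sum_pair hij]
    have h1 : (inner ℂ (e i) x : ℂ) = a := by
      simp [hx, inner_add_right, inner_smul_right, hone, hij, he.1]
    have h2 : (inner ℂ (e j) x : ℂ) = b := by
      simp [hx, inner_add_right, inner_smul_right, hone, hij.symm, he.1]
    rw [h1, h2]
  rw [hAx, hx]
  simp only [inner_add_left, inner_add_right, inner_smul_left, inner_smul_right, hone,
    if_pos rfl, if_neg hij, if_neg hij.symm, mul_zero, mul_one, add_zero, zero_add,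
    if_true, Complex.add_re, aux_key]

lemma aux_neg {H : Type*} [NormedAddCommGroup H] [InnerProductSpace ℂ H]
    (A : H →L[ℂ] H) (v : H) (γ : H →L[ℂ] H)
    (hγpos : ∀ x : H, 0 ≤ (inner ℂ x (γ x) : ℂ).re)
    (hdecomp : ∀ x : H, A x = (inner ℂ v x : ℂ) • v - γ x)
    (x : H) (hvx : (inner ℂ v x : ℂ) = 0) :
    (inner ℂ x (A x) : ℂ).re ≤ 0 := by
  rw [hdecomp x, inner_sub_right, inner_smul_right, hvx]
  simp only [zero_mul, zero_sub, Complex.neg_re, neg_nonpos]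
  exact hγpos x

/-- let `A` be a self-adjoint trace-class operator of the form
`A = P - γ` with `P = |v⟩⟨v|` a rank-one orthogonal projection and `γ ≥ 0`, with
`Tr A = 0`. `A` is presented through a spectral decomposition
`A x = ∑' i, λ_i ⟨e_i, x⟩ e_i` with `(e_i)` orthonormal and `λ` absolutely
summable; `Tr A = ∑ λ_i`, the trace norm is `∑ |λ_i|`, the operator norm is
`⨆ |λ_i|` and the Hilbert–Schmidt norm is `√(∑ λ_i²)`. Then `A` has at most one
positive eigenvalue, and `‖A‖₁ = 2‖A‖_op ≤ 2‖A‖_{HS}`. -/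
theorem stmt12 {H : Type*} [NormedAddCommGroup H] [InnerProductSpace ℂ H]
    [CompleteSpace H] {ι : Type*} [Countable ι]
    (e : ι → H) (he : Orthonormal ℂ e)
    (lam : ι → ℝ) (hsum : Summable fun i => |lam i|)
    (A : H →L[ℂ] H)
    (hA : ∀ x : H, A x = ∑' i, ((lam i : ℂ) * (inner ℂ (e i) x : ℂ)) • e i)
    (v : H) (hv : ‖v‖ = 1)
    (γ : H →L[ℂ] H)
    (hγpos : ∀ x : H, 0 ≤ (inner ℂ x (γ x) : ℂ).re)
    (hdecomp : ∀ x : H, A x = (inner ℂ v x : ℂ) • v - γ x)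
    (htr : ∑' i, lam i = 0) :
    {i : ι | 0 < lam i}.Subsingleton
    ∧ (∑' i, |lam i|) = 2 * (⨆ i, |lam i|)
    ∧ 2 * (⨆ i, |lam i|) ≤ 2 * Real.sqrt (∑' i, (lam i) ^ 2) := by
  classical
  have hlam : Summable lam := summable_abs_iff.mp hsum
  -- Part 1 : at most one positive eigenvalue
  have part1 : {i : ι | 0 < lam i}.Subsingleton := by
    intro i hi j hj
    simp only [Set.mem_setOf_eq] at hi hj
    by_contra hij
    by_cases hvi : (inner ℂ v (e i) : ℂ) = 0
    · -- use x = e i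
      have h1 := aux_quad e he lam A hA hij 1 0
      have hvx : (inner ℂ v ((1:ℂ) • e i + (0:ℂ) • e j) : ℂ) = 0 := by
        simp [inner_add_right, inner_smul_right, hvi]
      have h2 := aux_neg A v γ hγpos hdecomp _ hvx
      rw [h1] at h2
      simp at h2
      linarith
    · set a : ℂ := (inner ℂ v (e j) : ℂ) with ha
      set b : ℂ := -(inner ℂ v (e i) : ℂ) with hb
      have hb0 : b ≠ 0 := by simpa [hb] using hvi
      have h1 := aux_quad e he lam A hA hij a b
      have hvx : (inner ℂ v (a • e i + b • e j) : ℂ) = 0 := by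
        simp only [inner_add_right, inner_smul_right, ha, hb]
        ring
      have h2 := aux_neg A v γ hγpos hdecomp _ hvx
      rw [h1] at h2
      have hbpos : 0 < ‖b‖ := norm_pos_iff.mpr hb0
      nlinarith [mul_pos hj (pow_pos hbpos 2), mul_nonneg hi.le (sq_nonneg ‖a‖)]
  refine ⟨part1, ?_⟩
  -- Part 3 preliminaries (needed in both parts)
  by_cases hpos : ∃ i0, 0 < lam i0
  case pos =>
    obtain ⟨i0, hi0⟩ := hpos
    have : Nonempty ι := ⟨i0⟩
    have huniq : ∀ j, j ≠ i0 → lam j ≤ 0 := by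
      intro j hj
      by_contra h
      push_neg at h
      exact hj (part1 h hi0)
    have hite : Summable fun i => if i = i0 then 0 else |lam i| := by
      have := hsum.update i0 0
      refine this.congr (fun i => ?_)
      by_cases h : i = i0 <;> simp [h, Function.update]
    have h1 : ∑' i, |lam i| = |lam i0| + ∑' i, if i = i0 then 0 else |lam i| :=
      Summable.tsum_eq_add_tsum_ite hsum i0
    have h2 : ∑' i, lam i = lam i0 + ∑' i, if i = i0 then 0 else lam i :=
      Summable.tsum_eq_add_tsum_ite hlam i0
    have h3 : (fun i => if i = i0 then 0 else |lam i|)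
        = fun i => -(if i = i0 then 0 else lam i) := by
      funext i
      by_cases h : i = i0
      · simp [h]
      · simp [h, abs_of_nonpos (huniq i h)]
    have hT : ∑' i, (if i = i0 then 0 else |lam i|) = lam i0 := by
      rw [h3, tsum_neg]
      have : ∑' i, (if i = i0 then 0 else lam i) = -lam i0 := by
        rw [htr] at h2; linarith
      rw [this, neg_neg]
    have hbd : ∀ i, |lam i| ≤ lam i0 := by
      intro i
      by_cases h : i = i0
      · rw [h, abs_of_pos hi0]
      · rw [abs_of_nonpos (huniq i h)]
        calc -lam i = (if i = i0 then 0 else |lam i|) := by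
              simp [h, abs_of_nonpos (huniq i h)]
          _ ≤ ∑' i, (if i = i0 then 0 else |lam i|) :=
              Summable.le_tsum hite i (fun j _ => by positivity)
          _ = lam i0 := hT
    have hBdd : BddAbove (Set.range fun i => |lam i|) := by
      refine ⟨lam i0, ?_⟩
      rintro _ ⟨i, rfl⟩
      exact hbd i
    have hsup : (⨆ i, |lam i|) = lam i0 := by
      refine le_antisymm (ciSup_le hbd) ?_
      have := le_ciSup hBdd i0
      rwa [abs_of_pos hi0] at this
    constructor
    · rw [h1, hT, hsup, abs_of_pos hi0]; ring
    · -- 2 * sup ≤ 2 * sqrt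
      have hC : ∀ i, |lam i| ≤ ∑' i, |lam i| :=
        fun i => Summable.le_tsum hsum i (fun j _ => abs_nonneg _)
      have hsq : Summable fun i => (lam i) ^ 2 := by
        refine Summable.of_nonneg_of_le (fun i => sq_nonneg _)
          (fun i => ?_) (hsum.mul_left (∑' i, |lam i|))
        calc (lam i) ^ 2 = |lam i| * |lam i| := by rw [sq, ← abs_mul_abs_self]
          _ ≤ (∑' i, |lam i|) * |lam i| :=
              mul_le_mul_of_nonneg_right (hC i) (abs_nonneg _)
      have hb : ∀ i, |lam i| ≤ Real.sqrt (∑' i, (lam i) ^ 2) := by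
        intro i
        rw [← Real.sqrt_sq_eq_abs]
        exact Real.sqrt_le_sqrt (Summable.le_tsum hsq i (fun j _ => sq_nonneg _))
      have := ciSup_le hb
      linarith
  case neg =>
    push_neg at hpos
    have hz : ∀ i, lam i = 0 := by
      intro i
      have h1 : -lam i ≤ ∑' i, -lam i :=
        Summable.le_tsum hlam.neg i (fun j _ => neg_nonneg.mpr (hpos j))
      rw [tsum_neg, htr, neg_zero] at h1
      linarith [hpos i]
    have habs : (fun i => |lam i|) = fun _ => (0:ℝ) := by
      funext i; simp [hz i]
    have hsq : (fun i => (lam i) ^ 2) = fun _ => (0:ℝ) := by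
      funext i; simp [hz i]
    rcases isEmpty_or_nonempty ι with hE | hN
    · constructor
      · rw [tsum_empty, iSup_of_empty', Real.sSup_empty]; ring
      · rw [iSup_of_empty', Real.sSup_empty]
        have := Real.sqrt_nonneg (∑' i, (lam i) ^ 2)
        linarith
    · constructor
      · rw [habs, tsum_zero, ciSup_const]; ring
      · rw [habs, ciSup_const]
        have := Real.sqrt_nonneg (∑' i, (lam i) ^ 2)
        linarith
end

section
/- Let $\varphi_+(X) = (2\pi)^{-1/4}\sigma_H^{-1/2}\,e^{-(X-X_0)^2/(4\sigma_H^2)}e^{-ip_H X}$ be a normalized Gaussian with spread $\sigma_H > 0$, and let $\sigma > 0$. Then the Hilbert–Schmidt norm of the operator with integral kernel $\varphi_+(X)\overline{\varphi_+(X')}\bigl(1 - e^{-(X-X')^2/(2\sigma^2)}\bigr)$ satisfies $\Bigl\|\varphi_+(X)\overline{\varphi_+(X')}\bigl(1 - e^{-(X-X')^2/(2\sigma^2)}\bigr)\Bigr\|_{HS}^2 \le \frac{2\sigma_H^2}{\sigma^2}$. -/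
open MeasureTheory Complex

/-- for the normalized Gaussian
`φ₊(X) = (2π)^{-1/4} σ_H^{-1/2} e^{-(X-X₀)²/(4σ_H²)} e^{-ip_H X}`, the squared
Hilbert–Schmidt norm of the kernel
`φ₊(X) conj(φ₊(X')) (1 - e^{-(X-X')²/(2σ²)})` is at most `2σ_H²/σ²`. -/
theorem stmt14 (σ σH X0 pH : ℝ) (hσ : 0 < σ) (hσH : 0 < σH) :
    let φp : ℝ → ℂ := fun X =>
      ((((2 * Real.pi) ^ (-(1 : ℝ) / 4) / Real.sqrt σH) : ℝ) : ℂ)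
        * Complex.exp (((-((X - X0) ^ 2) / (4 * σH ^ 2) : ℝ) : ℂ))
        * Complex.exp ((-Complex.I) * ((pH * X : ℝ) : ℂ))
    (∫ X : ℝ, ∫ X' : ℝ,
        ‖φp X * (starRingEnd ℂ) (φp X')
          * (1 - ((Real.exp (-((X - X') ^ 2 / (2 * σ ^ 2))) : ℝ) : ℂ))‖ ^ 2)
      ≤ 2 * σH ^ 2 / σ ^ 2 := by
  intro φp
  have hπ := Real.pi_pos
  set b1 : ℝ := 1/(2*σH^2) with hb1def
  set b3 : ℝ := 1/(σ^2) with hb3def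
  have hb1 : 0 < b1 := by positivity
  have hb3 : 0 < b3 := by positivity
  set C : ℝ := ((2*Real.pi) ^ (-(1:ℝ)/4) / Real.sqrt σH)^2 with hCdef
  have hC : 0 < C := by positivity
  set f : ℝ → ℝ := fun X => C * Real.exp (-b1 * (X - X0)^2) with hfdef
  set G : ℝ → ℝ := fun X => Real.exp (-b3 * (X - X0)^2) with hGdef
  have hfpos : ∀ X, 0 < f X := fun X => by positivity
  have hGpos : ∀ X, 0 < G X := fun X => by positivity
  -- the kernel's squared norm
  have hnorm : ∀ X X' : ℝ,
      ‖φp X * (starRingEnd ℂ) (φp X')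
          * (1 - ((Real.exp (-((X - X') ^ 2 / (2 * σ ^ 2))) : ℝ) : ℂ))‖ ^ 2
        = f X * f X' * (1 - Real.exp (-((X - X')^2 / (2*σ^2))))^2 := by
    intro X X'
    have he1 : Real.exp (-((X - X')^2 / (2*σ^2))) ≤ 1 :=
      Real.exp_le_one_iff.2 (neg_nonpos.2 (by positivity))
    have hnφ : ∀ Y : ℝ, ‖φp Y‖ ^ 2 = f Y := by
      intro Y
      have h1 : ‖φp Y‖ = ((2*Real.pi) ^ (-(1:ℝ)/4) / Real.sqrt σH)
          * Real.exp (-(Y - X0)^2 / (4*σH^2)) := by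
        have hre : ((-Complex.I) * ((pH * Y : ℝ) : ℂ)).re = 0 := by simp
        rw [show φp Y = ((((2 * Real.pi) ^ (-(1 : ℝ) / 4) / Real.sqrt σH) : ℝ) : ℂ)
            * Complex.exp (((-((Y - X0) ^ 2) / (4 * σH ^ 2) : ℝ) : ℂ))
            * Complex.exp ((-Complex.I) * ((pH * Y : ℝ) : ℂ)) from rfl,
          norm_mul, norm_mul,
          Complex.norm_real, Real.norm_eq_abs, Complex.norm_exp, Complex.norm_exp, hre, Real.exp_zero,
          Complex.ofReal_re,
          _root_.abs_of_nonneg (show (0:ℝ) ≤ (2*Real.pi) ^ (-(1:ℝ)/4) / Real.sqrt σH by positivity),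
          mul_one]
      have h2 : (-(Y - X0)^2 / (4*σH^2)) + (-(Y - X0)^2 / (4*σH^2)) = -b1 * (Y - X0)^2 := by
        rw [hb1def]; field_simp; ring
      rw [h1, mul_pow, sq (Real.exp _), ← Real.exp_add, h2, hfdef, ← hCdef]
    have hconj : ‖(starRingEnd ℂ) (φp X')‖ = ‖φp X'‖ := by simp
    have h3 : ‖(1:ℂ) - ((Real.exp (-((X - X')^2 / (2*σ^2))) : ℝ) : ℂ)‖
        = 1 - Real.exp (-((X - X')^2 / (2*σ^2))) := by
      rw [show (1:ℂ) - ((Real.exp (-((X - X')^2 / (2*σ^2))) : ℝ) : ℂ)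
          = (((1 - Real.exp (-((X - X')^2 / (2*σ^2))) : ℝ)) : ℂ) by push_cast; ring,
        Complex.norm_real]
      exact _root_.abs_of_nonneg (by linarith)
    rw [norm_mul, norm_mul, hconj, h3, mul_pow, mul_pow, hnφ, hnφ]
  -- pointwise bound
  have hpt : ∀ X X' : ℝ,
      f X * f X' * (1 - Real.exp (-((X - X')^2 / (2*σ^2))))^2
        ≤ f X * f X' - (f X * G X) * (f X' * G X') := by
    intro X X'
    set e := Real.exp (-((X - X')^2 / (2*σ^2))) with hedef
    have he0 : 0 < e := Real.exp_pos _
    have he1 : e ≤ 1 := Real.exp_le_one_iff.2 (neg_nonpos.2 (by positivity))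
    have key : G X * G X' ≤ e := by
      rw [hGdef]
      show Real.exp _ * Real.exp _ ≤ e
      rw [← Real.exp_add, hedef]
      apply Real.exp_le_exp.2
      have hnum : 0 ≤ (2*(X-X0)^2 + 2*(X'-X0)^2 - (X-X')^2) / (2*σ^2) :=
        div_nonneg (by nlinarith [sq_nonneg ((X-X0)+(X'-X0))]) (by positivity)
      have hdiff : -((X - X')^2/(2*σ^2)) - (-b3 * (X-X0)^2 + -b3 * (X'-X0)^2)
          = (2*(X-X0)^2 + 2*(X'-X0)^2 - (X-X')^2) / (2*σ^2) := by
        rw [hb3def]; field_simp; ring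
      linarith
    have hGG : 0 < G X * G X' := by positivity
    have step1 : (1-e)^2 ≤ 1 - G X * G X' := by nlinarith
    calc f X * f X' * (1-e)^2 ≤ f X * f X' * (1 - G X * G X') := by
          apply mul_le_mul_of_nonneg_left step1 (by positivity)
      _ = f X * f X' - (f X * G X) * (f X' * G X') := by ring
  -- integrability facts
  have hIexp : ∀ b : ℝ, 0 < b → Integrable (fun y : ℝ => Real.exp (-b*(y-X0)^2)) :=
    fun b hb => (integrable_exp_neg_mul_sq hb).comp_sub_right X0
  have hIval : ∀ b : ℝ, 0 < b → (∫ y : ℝ, Real.exp (-b*(y-X0)^2)) = Real.sqrt (Real.pi / b) := by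
    intro b hb
    rw [show (∫ y : ℝ, Real.exp (-b*(y-X0)^2))
        = ∫ y : ℝ, (fun z : ℝ => Real.exp (-b*z^2)) (y - X0) from rfl]
    rw [integral_sub_right_eq_self (fun z : ℝ => Real.exp (-b*z^2)) X0]
    exact integral_gaussian b
  have hfG : ∀ X, f X * G X = C * Real.exp (-(b1+b3)*(X-X0)^2) := by
    intro X
    show C * Real.exp _ * Real.exp _ = _
    rw [mul_assoc, ← Real.exp_add]
    ring_nf
  have hIf : Integrable f := (hIexp b1 hb1).const_mul C
  have hIfG : Integrable (fun X => f X * G X) := by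
    simp only [hfG]; exact ((hIexp (b1+b3) (by positivity)).const_mul C)
  set IA : ℝ := C * Real.sqrt (Real.pi / b1) with hIAdef
  set IB : ℝ := C * Real.sqrt (Real.pi / (b1+b3)) with hIBdef
  have hintf : ∫ X, f X = IA := by
    rw [hfdef]; rw [integral_const_mul]; rw [hIval b1 hb1]
  have hintfG : ∫ X, f X * G X = IB := by
    simp only [hfG]; rw [integral_const_mul, hIval (b1+b3) (by positivity)]
  -- inner integral bound
  have hinner : ∀ X : ℝ,
      (∫ X' : ℝ, ‖φp X * (starRingEnd ℂ) (φp X')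
          * (1 - ((Real.exp (-((X - X') ^ 2 / (2 * σ ^ 2))) : ℝ) : ℂ))‖ ^ 2)
        ≤ f X * IA - (f X * G X) * IB := by
    intro X
    have hInt2 : Integrable (fun X' => f X * f X' - (f X * G X) * (f X' * G X')) :=
      (hIf.const_mul (f X)).sub (hIfG.const_mul (f X * G X))
    have hmono := integral_mono_of_nonneg
      (f := fun X' : ℝ => ‖φp X * (starRingEnd ℂ) (φp X')
          * (1 - ((Real.exp (-((X - X') ^ 2 / (2 * σ ^ 2))) : ℝ) : ℂ))‖ ^ 2)
      (g := fun X' => f X * f X' - (f X * G X) * (f X' * G X'))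
      (Filter.Eventually.of_forall fun X' => by positivity)
      hInt2
      (Filter.Eventually.of_forall fun X' => by
        have h := hpt X X'; rw [← hnorm X X'] at h; exact h)
    have eA : (∫ X' : ℝ, f X * f X') = f X * IA := by
      rw [integral_const_mul]; rw [hintf]
    have eB : (∫ X' : ℝ, (f X * G X) * (f X' * G X')) = (f X * G X) * IB := by
      rw [integral_const_mul]; rw [hintfG]
    refine hmono.trans (le_of_eq ?_)
    rw [integral_sub (hIf.const_mul (f X)) (hIfG.const_mul (f X * G X)), eA, eB]
  -- outer integral bound
  have houter : (∫ X : ℝ, ∫ X' : ℝ,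
        ‖φp X * (starRingEnd ℂ) (φp X')
          * (1 - ((Real.exp (-((X - X') ^ 2 / (2 * σ ^ 2))) : ℝ) : ℂ))‖ ^ 2)
      ≤ IA^2 - IB^2 := by
    have htop : Integrable (fun X => f X * IA - (f X * G X) * IB) :=
      (hIf.mul_const IA).sub (hIfG.mul_const IB)
    have hmono := integral_mono_of_nonneg (f := fun X => ∫ X' : ℝ,
        ‖φp X * (starRingEnd ℂ) (φp X')
          * (1 - ((Real.exp (-((X - X') ^ 2 / (2 * σ ^ 2))) : ℝ) : ℂ))‖ ^ 2)
      (g := fun X => f X * IA - (f X * G X) * IB)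
      (Filter.Eventually.of_forall fun X => integral_nonneg fun X' => by positivity)
      htop (Filter.Eventually.of_forall hinner)
    have eC : (∫ X : ℝ, f X * IA) = IA * IA := by
      rw [integral_mul_const]; rw [hintf]
    have eD : (∫ X : ℝ, (f X * G X) * IB) = IB * IB := by
      rw [integral_mul_const]; rw [hintfG]
    refine hmono.trans (le_of_eq ?_)
    rw [integral_sub (hIf.mul_const IA) (hIfG.mul_const IB), eC, eD]
    ring
  -- final computation
  refine houter.trans ?_
  have hπ' : Real.pi ≠ 0 := ne_of_gt hπ
  have hσH' : σH ≠ 0 := ne_of_gt hσH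
  have hσ' : σ ≠ 0 := ne_of_gt hσ
  have hx : ((2*Real.pi) ^ (-(1:ℝ)/4))^2 = ((2*Real.pi) ^ ((1:ℝ)/2))⁻¹ := by
    rw [← Real.rpow_natCast ((2*Real.pi) ^ (-(1:ℝ)/4)) 2, ← Real.rpow_mul (by positivity),
      ← Real.rpow_neg (by positivity)]
    norm_num
  have hCval : C = 1/(Real.sqrt (2*Real.pi) * σH) := by
    rw [hCdef, div_pow, Real.sq_sqrt hσH.le, hx, Real.sqrt_eq_rpow]
    field_simp
  have hC2 : C^2 = 1/(2*Real.pi*σH^2) := by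
    rw [hCval, div_pow, mul_pow, Real.sq_sqrt (by positivity), one_pow]
  have hIA2 : IA^2 = 1 := by
    rw [hIAdef, mul_pow, Real.sq_sqrt (by positivity), hC2, hb1def]
    field_simp
  have hIB2 : IB^2 = σ^2/(σ^2 + 2*σH^2) := by
    have hsum : (1:ℝ)/(2*σH^2) + 1/σ^2 = (σ^2+2*σH^2)/(2*σH^2*σ^2) := by
      field_simp
    have hden : σ^2 + 2*σH^2 ≠ 0 := by positivity
    rw [hIBdef, mul_pow, Real.sq_sqrt (by positivity), hC2, hb1def, hb3def, hsum,
      div_div_eq_mul_div]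
    field_simp
  rw [hIA2, hIB2]
  have hden : (0:ℝ) < σ^2 + 2*σH^2 := by positivity
  have e : 1 - σ^2/(σ^2+2*σH^2) = 2*σH^2/(σ^2+2*σH^2) := by
    field_simp
    ring
  rw [e, div_le_div_iff₀ hden (by positivity)]
  nlinarith [sq_nonneg σ, sq_nonneg σH]
end
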